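/- arXiv:2506.14892 — 2 statements merged into one kernel-verified Lean document; each statement's English description precedes it below -/
import Mathlib

section
/- Let π ⋖ π' be a cover in Π(X) obtained by merging blocks B_i and B_j of π, and fix x ∈ B_i, y ∈ B_j. Then the map sending a minimal atomic decomposition S of π to S ∪ {π_{xy}} is an injection into the minimal atomic decompositions of π'; moreover, for distinct pairs (x,y) ≠ (x',y') with x,x' ∈ B_i and y,y' ∈ B_j, the images of the corresponding maps are disjoint. -/
variable {X : Type*} [Fintype X] [DecidableEq X]

/-- The atom of the partition lattice whose only nonsingleton block is `{x, y}`. -/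
def pairSetoid (x y : X) : Setoid X where
  r a b := a = b ∨ (a = x ∧ b = y) ∨ (a = y ∧ b = x)
  iseqv := by
    refine ⟨fun a => Or.inl rfl, ?_, ?_⟩
    · intro a b h; tauto
    · intro a b c h1 h2; aesop

/-- `S` is an atomic decomposition of the partition `π`. -/
def IsAtomicDecomp (π : Setoid X) (S : Set (Setoid X)) : Prop :=
  (∀ a ∈ S, IsAtom a) ∧ sSup S = π

/-- `S` is a minimal atomic decomposition of `π`. -/
def IsMinAtomicDecomp (π : Setoid X) (S : Set (Setoid X)) : Prop :=
  IsAtomicDecomp π S ∧ ∀ T ⊂ S, ¬ IsAtomicDecomp π T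

/-- `𝔑 π`: the number of minimal atomic decompositions of `π`. -/
noncomputable def numMinDecomp (π : Setoid X) : ℕ :=
  {S | IsMinAtomicDecomp π S}.ncard

/-- The graph on `X` whose edges are the nonsingleton blocks of the atoms in `S`. -/
def atomGraph (S : Set (Setoid X)) : SimpleGraph X where
  Adj a b := a ≠ b ∧ pairSetoid a b ∈ S
  symm := by
    constructor
    intro a b ⟨h1, h2⟩
    refine ⟨h1.symm, ?_⟩
    have h : pairSetoid b a = pairSetoid a b := by
      apply Setoid.ext; intro u v
      show _ ∨ _ ↔ _ ∨ _; tauto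
    rw [h]; exact h2
  loopless := by constructor; intro a ⟨h, _⟩; exact h rfl

section AuxLemmas

set_option linter.unusedSectionVars false

/-- The join of `q` with the pair atom, described explicitly. -/
def joinPair (q : Setoid X) (x y : X) : Setoid X where
  r u v := q u v ∨ (q u x ∧ q y v) ∨ (q u y ∧ q x v)
  iseqv := by
    refine ⟨fun a => Or.inl (q.refl' a), ?_, ?_⟩
    · rintro a b (h | ⟨h1, h2⟩ | ⟨h1, h2⟩)
      · exact Or.inl (q.symm' h)
      · exact Or.inr (Or.inr ⟨q.symm' h2, q.symm' h1⟩)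
      · exact Or.inr (Or.inl ⟨q.symm' h2, q.symm' h1⟩)
    · rintro a b c (h | ⟨h1, h2⟩ | ⟨h1, h2⟩) (h' | ⟨h1', h2'⟩ | ⟨h1', h2'⟩)
      · exact Or.inl (q.trans' h h')
      · exact Or.inr (Or.inl ⟨q.trans' h h1', h2'⟩)
      · exact Or.inr (Or.inr ⟨q.trans' h h1', h2'⟩)
      · exact Or.inr (Or.inl ⟨h1, q.trans' h2 h'⟩)
      · exact Or.inl (q.trans' h1 (q.trans' (q.symm' (q.trans' h2 h1')) h2'))
      · exact Or.inl (q.trans' h1 h2')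
      · exact Or.inr (Or.inr ⟨h1, q.trans' h2 h'⟩)
      · exact Or.inl (q.trans' h1 h2')
      · exact Or.inl (q.trans' h1 (q.trans' (q.symm' (q.trans' h2 h1')) h2'))

lemma sup_pairSetoid (q : Setoid X) (x y : X) :
    q ⊔ pairSetoid x y = joinPair q x y := by
  apply le_antisymm
  · apply sup_le
    · exact Setoid.le_def.mpr fun h => Or.inl h
    · refine Setoid.le_def.mpr ?_
      rintro u v (rfl | ⟨rfl, rfl⟩ | ⟨rfl, rfl⟩)
      · exact Or.inl (q.refl' _)
      · exact Or.inr (Or.inl ⟨q.refl' _, q.refl' _⟩)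
      · exact Or.inr (Or.inr ⟨q.refl' _, q.refl' _⟩)
  · refine Setoid.le_def.mpr ?_
    have hq : q ≤ q ⊔ pairSetoid x y := le_sup_left
    have ha : pairSetoid x y ≤ q ⊔ pairSetoid x y := le_sup_right
    have hxy : (q ⊔ pairSetoid x y) x y :=
      Setoid.le_def.mp ha (Or.inr (Or.inl ⟨rfl, rfl⟩))
    rintro u v (h | ⟨h1, h2⟩ | ⟨h1, h2⟩)
    · exact Setoid.le_def.mp hq h
    · exact (q ⊔ pairSetoid x y).trans' (Setoid.le_def.mp hq h1)
        ((q ⊔ pairSetoid x y).trans' hxy (Setoid.le_def.mp hq h2))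
    · exact (q ⊔ pairSetoid x y).trans' (Setoid.le_def.mp hq h1)
        ((q ⊔ pairSetoid x y).trans' ((q ⊔ pairSetoid x y).symm' hxy)
          (Setoid.le_def.mp hq h2))

lemma pairSetoid_isAtom {x y : X} (h : x ≠ y) : IsAtom (pairSetoid x y) := by
  constructor
  · intro hbot
    have : pairSetoid x y x y := Or.inr (Or.inl ⟨rfl, rfl⟩)
    rw [hbot] at this
    exact h this
  · intro b hb
    by_contra hne'
    have hex : ∃ u v, u ≠ v ∧ b u v := by
      by_contra hno
      push_neg at hno
      apply hne'
      apply le_bot_iff.mp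
      refine Setoid.le_def.mpr fun {u v} huv => ?_
      by_contra hne''
      exact (hno u v (fun e => hne'' e) huv)
    obtain ⟨u, v, huv, hbuv⟩ := hex
    have := Setoid.le_def.mp hb.le hbuv
    have hbxy : b x y := by
      rcases this with rfl | ⟨rfl, rfl⟩ | ⟨rfl, rfl⟩
      · exact absurd rfl huv
      · exact hbuv
      · exact b.symm' hbuv
    apply hb.ne
    apply le_antisymm hb.le
    refine Setoid.le_def.mpr ?_
    rintro a' b' (rfl | ⟨rfl, rfl⟩ | ⟨rfl, rfl⟩)
    · exact b.refl' _
    · exact hbxy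
    · exact b.symm' hbxy

/-- Cancellation: joins with the pair atom over `q ≤ π`. -/
lemma key_cancel (q π : Setoid X) (x y : X) (hq : q ≤ π) (hxy : ¬ π x y)
    (h : q ⊔ pairSetoid x y = π ⊔ pairSetoid x y) : q = π := by
  apply le_antisymm hq
  refine Setoid.le_def.mpr fun {u v} huv => ?_
  have hj : joinPair q x y u v := by
    rw [← sup_pairSetoid, h, sup_pairSetoid]
    exact Or.inl huv
  rcases hj with h' | ⟨h1, h2⟩ | ⟨h1, h2⟩
  · exact h'
  · exact absurd (π.trans' (π.trans' (π.symm' (Setoid.le_def.mp hq h1)) huv)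
      (π.symm' (Setoid.le_def.mp hq h2))) hxy
  · exact absurd (π.trans' (Setoid.le_def.mp hq h2)
      (π.trans' (π.symm' huv) (Setoid.le_def.mp hq h1))) hxy

end AuxLemmas

/-- Adding the atom `π_{xy}` (with `x ∈ Bi`, `y ∈ Bj`) to a minimal atomic
decomposition of `π` gives an injection into the minimal atomic decompositions of `π'`, and
the images of these maps for distinct pairs `(x,y)` are disjoint. -/
theorem addAtom_injection (π π' : Setoid X) (Bi Bj : Set X)
    (hcov : π ⋖ π') (hBi : Bi ∈ π.classes) (hBj : Bj ∈ π.classes) (hne : Bi ≠ Bj)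
    (hmerge : π'.classes = insert (Bi ∪ Bj) (π.classes \ {Bi, Bj}))
    (x y : X) (hx : x ∈ Bi) (hy : y ∈ Bj) :
    (∀ S, IsMinAtomicDecomp π S → IsMinAtomicDecomp π' (S ∪ {pairSetoid x y})) ∧
    (∀ S S', IsMinAtomicDecomp π S → IsMinAtomicDecomp π S' →
      S ∪ {pairSetoid x y} = S' ∪ {pairSetoid x y} → S = S') ∧
    (∀ x' y' : X, x' ∈ Bi → y' ∈ Bj → (x, y) ≠ (x', y') →
      ∀ S S', IsMinAtomicDecomp π S → IsMinAtomicDecomp π S' →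
        S ∪ {pairSetoid x y} ≠ S' ∪ {pairSetoid x' y'}) := by
  -- no element of Bi is π-related to an element of Bj
  have hnotrel : ∀ u ∈ Bi, ∀ v ∈ Bj, ¬ π u v := by
    intro u hu v hv h
    apply hne
    apply Setoid.eq_of_mem_classes hBi ?_ hBj hv
    obtain ⟨w, hw⟩ := hBi
    rw [hw] at hu ⊢
    exact π.trans' (π.symm' h) hu
  have hπxy : ¬ π x y := hnotrel x hx y hy
  have hxyne : x ≠ y := fun h => hne (Setoid.eq_of_mem_classes hBi hx hBj (h ▸ hy))
  -- x and y are π'-related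
  have hπ'xy : π' x y := by
    have hBiBj : Bi ∪ Bj ∈ π'.classes := by rw [hmerge]; exact Set.mem_insert _ _
    obtain ⟨w, hw⟩ := hBiBj
    have hx' : x ∈ Bi ∪ Bj := Or.inl hx
    have hy' : y ∈ Bi ∪ Bj := Or.inr hy
    rw [hw] at hx' hy'
    exact π'.trans' hx' (π'.symm' hy')
  -- the join of π with the pair atom is π'
  have hsup : π ⊔ pairSetoid x y = π' := by
    have h1 : π ⊔ pairSetoid x y ≤ π' := by
      apply sup_le hcov.lt.le
      refine Setoid.le_def.mpr ?_
      rintro u v (rfl | ⟨rfl, rfl⟩ | ⟨rfl, rfl⟩)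
      · exact π'.refl' _
      · exact hπ'xy
      · exact π'.symm' hπ'xy
    have h2 : π < π ⊔ pairSetoid x y := by
      apply left_lt_sup.mpr
      intro hle
      exact hπxy (Setoid.le_def.mp hle (Or.inr (Or.inl ⟨rfl, rfl⟩)))
    exact (h1.lt_or_eq).resolve_left (hcov.2 h2)
  -- the atom is never in a decomposition of π
  have hanotin : ∀ S, IsMinAtomicDecomp π S → pairSetoid x y ∉ S := by
    intro S hS h
    have : pairSetoid x y ≤ π := hS.1.2 ▸ le_sSup h
    exact hπxy (Setoid.le_def.mp this (Or.inr (Or.inl ⟨rfl, rfl⟩)))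
  -- Part 1
  have part1 : ∀ S, IsMinAtomicDecomp π S → IsMinAtomicDecomp π' (S ∪ {pairSetoid x y}) := by
    intro S hS
    obtain ⟨⟨hatoms, hsupS⟩, hmin⟩ := hS
    refine ⟨⟨?_, ?_⟩, ?_⟩
    · rintro b (hb | hb)
      · exact hatoms b hb
      · rw [Set.mem_singleton_iff] at hb
        rw [hb]; exact pairSetoid_isAtom hxyne
    · rw [sSup_union, sSup_singleton, hsupS, hsup]
    · rintro T hT ⟨hTatoms, hTsup⟩
      by_cases haT : pairSetoid x y ∈ T
      · set T' := T \ {pairSetoid x y} with hT'def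
        have hT'sub : T' ⊂ S := by
          constructor
          · intro b hb
            rcases hT.subset hb.1 with h | h
            · exact h
            · exact absurd h hb.2
          · intro hST'
            obtain ⟨c, hc, hcT⟩ := Set.exists_of_ssubset hT
            rcases hc with hc | hc
            · exact hcT (hST' hc).1
            · rw [Set.mem_singleton_iff] at hc
              exact hcT (hc ▸ haT)
        apply hmin T' hT'sub
        refine ⟨fun b hb => hTatoms b hb.1, ?_⟩
        have hTeq : T' ∪ {pairSetoid x y} = T := by
          rw [hT'def, Set.diff_union_self, Set.union_eq_self_of_subset_right]
          simpa using haT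
        have hq : sSup T' ≤ π := hsupS ▸ sSup_le_sSup hT'sub.subset
        have hj : sSup T' ⊔ pairSetoid x y = π ⊔ pairSetoid x y := by
          rw [hsup, ← hTsup, ← hTeq, sSup_union, sSup_singleton]
        exact key_cancel _ _ x y hq hπxy hj
      · have hTS : T ⊆ S := by
          intro b hb
          rcases hT.subset hb with h | h
          · exact h
          · rw [Set.mem_singleton_iff] at h
            exact absurd (h ▸ hb) haT
        have : π' ≤ π := hTsup ▸ sSup_le_sSup hTS |>.trans hsupS.le
        exact absurd (hcov.lt.trans_le this) (lt_irrefl _)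
  refine ⟨part1, ?_, ?_⟩
  -- Part 2
  · intro S S' hS hS' heq
    have h1 := hanotin S hS
    have h2 := hanotin S' hS'
    apply Set.Subset.antisymm
    · intro b hb
      have : b ∈ S' ∪ {pairSetoid x y} := heq ▸ Or.inl hb
      rcases this with h | h
      · exact h
      · rw [Set.mem_singleton_iff] at h
        exact absurd (h ▸ hb) h1
    · intro b hb
      have : b ∈ S ∪ {pairSetoid x y} := heq ▸ Or.inl hb
      rcases this with h | h
      · exact h
      · rw [Set.mem_singleton_iff] at h
        exact absurd (h ▸ hb) h2
  -- Part 3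
  · intro x' y' hx' hy' hpne S S' hS hS' heq
    have ha'ne : pairSetoid x' y' ≠ pairSetoid x y := by
      intro h
      have hrel : pairSetoid x y x' y' := by
        rw [← h]; exact Or.inr (Or.inl ⟨rfl, rfl⟩)
      rcases hrel with h1 | ⟨h1, h2⟩ | ⟨h1, h2⟩
      · exact hne (Setoid.eq_of_mem_classes hBi hx' hBj (h1 ▸ hy'))
      · exact hpne (by rw [h1, h2])
      · exact hne (Setoid.eq_of_mem_classes hBi hx' hBj (h1 ▸ hy))
    have hmem : pairSetoid x' y' ∈ S ∪ {pairSetoid x y} := by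
      rw [heq]; exact Or.inr rfl
    rcases hmem with h | h
    · have : pairSetoid x' y' ≤ π := hS.1.2 ▸ le_sSup h
      exact hnotrel x' hx' y' hy' (Setoid.le_def.mp this (Or.inr (Or.inl ⟨rfl, rfl⟩)))
    · exact ha'ne h
end

section
/- Let R be a set of atoms of Π(X) and G_R the graph on X with edges corresponding to atoms of R. If G_R is a forest with m edges, then the number of distinct partitions of X expressible as the join of some subset of R (including the empty join, the discrete partition) equals 2^m. -/
variable {X : Type*} [Fintype X] [DecidableEq X]

lemma pairSetoid_rel {x y a b : X} :
    pairSetoid x y a b ↔ (a = b ∨ (a = x ∧ b = y) ∨ (a = y ∧ b = x)) := Iff.rfl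

lemma pairSetoid_comm (x y : X) : pairSetoid x y = pairSetoid y x := by
  apply Setoid.ext; intro u v
  show _ ∨ _ ↔ _ ∨ _; tauto

lemma pairSetoid_ne_bot {x y : X} (h : x ≠ y) : pairSetoid x y ≠ ⊥ := by
  intro hbot
  have : pairSetoid x y x y := Or.inr (Or.inl ⟨rfl, rfl⟩)
  rw [hbot] at this
  exact h this

lemma pairSetoid_le {x y : X} {a : Setoid X} (h : a x y) : pairSetoid x y ≤ a := by
  rw [Setoid.le_def]
  rintro u v (rfl | ⟨rfl, rfl⟩ | ⟨rfl, rfl⟩)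
  · exact a.refl _
  · exact h
  · exact a.symm h

lemma atom_eq_pairSetoid {a : Setoid X} (ha : IsAtom a) :
    ∃ x y, x ≠ y ∧ a = pairSetoid x y := by
  have hne : ∃ x y, x ≠ y ∧ a x y := by
    by_contra hcon
    push_neg at hcon
    apply ha.1
    apply le_antisymm _ bot_le
    rw [Setoid.le_def]
    intro x y hxy
    have : x = y := by
      by_contra hne
      exact hne ((hcon x y hne).elim hxy)
    show (⊥ : Setoid X) x y
    rw [this]
  obtain ⟨x, y, hxy, hrel⟩ := hne
  refine ⟨x, y, hxy, ?_⟩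
  rcases (ha.le_iff.mp (pairSetoid_le hrel)) with h | h
  · exact absurd h (pairSetoid_ne_bot hxy)
  · exact h.symm

lemma pairSetoid_inj {x y u v : X} (hxy : x ≠ y)
    (h : pairSetoid x y = pairSetoid u v) : s(x, y) = s(u, v) := by
  have : pairSetoid u v x y := by rw [← h]; exact Or.inr (Or.inl ⟨rfl, rfl⟩)
  rcases this with h1 | ⟨rfl, rfl⟩ | ⟨rfl, rfl⟩
  · exact absurd h1 hxy
  · rfl
  · exact Sym2.eq_swap

lemma sSup_rel_iff_reachable {T : Set (Setoid X)} (hT : ∀ a ∈ T, IsAtom a) {p q : X} :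
    (sSup T) p q ↔ (atomGraph T).Reachable p q := by
  rw [Setoid.sSup_eq_eqvGen]
  constructor
  · intro h
    induction h with
    | rel x y hxy =>
      obtain ⟨r, hrT, hr⟩ := hxy
      obtain ⟨u, v, huv, rfl⟩ := atom_eq_pairSetoid (hT r hrT)
      rcases hr with rfl | ⟨rfl, rfl⟩ | ⟨rfl, rfl⟩
      · exact SimpleGraph.Reachable.refl _
      · exact SimpleGraph.Adj.reachable ⟨huv, hrT⟩
      · exact SimpleGraph.Adj.reachable ⟨huv.symm, by rw [pairSetoid_comm]; exact hrT⟩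
    | refl x => exact SimpleGraph.Reachable.refl _
    | symm x y _ ih => exact ih.symm
    | trans x y z _ _ ih1 ih2 => exact ih1.trans ih2
  · intro h
    obtain ⟨w⟩ := h
    induction w with
    | nil => exact Relation.EqvGen.refl _
    | cons hadj _ ih =>
      exact Relation.EqvGen.trans _ _ _
        (Relation.EqvGen.rel _ _ ⟨_, hadj.2, Or.inr (Or.inl ⟨rfl, rfl⟩)⟩) ih

lemma pair_mem_of_sSup_rel {R T : Set (Setoid X)} (hR : ∀ a ∈ R, IsAtom a)
    (hforest : (atomGraph R).IsAcyclic) (hTR : T ⊆ R) {x y : X}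
    (hadj : (atomGraph R).Adj x y) (hrel : (sSup T) x y) : pairSetoid x y ∈ T := by
  have hT : ∀ a ∈ T, IsAtom a := fun a ha => hR a (hTR ha)
  have hreach : (atomGraph T).Reachable x y := (sSup_rel_iff_reachable hT).mp hrel
  have hle : atomGraph T ≤ atomGraph R := fun a b hab => ⟨hab.1, hTR hab.2⟩
  obtain ⟨w⟩ := hreach
  let p : (atomGraph T).Path x y := w.toPath
  have hqpath : (p.val.mapLe hle).IsPath := (SimpleGraph.Walk.mapLe_isPath hle).mpr p.prop
  have huniq := hforest.path_unique ⟨p.val.mapLe hle, hqpath⟩ (SimpleGraph.Path.singleton hadj)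
  have hw : p.val.mapLe hle = (SimpleGraph.Path.singleton hadj).val :=
    congrArg Subtype.val huniq
  have hedge : s(x, y) ∈ (p.val.mapLe hle).edges := by
    rw [hw]
    exact SimpleGraph.Path.mk'_mem_edges_singleton hadj
  have hedge' : s(x, y) ∈ p.val.edges := by
    simpa [SimpleGraph.Walk.mapLe, SimpleGraph.Walk.edges_map,
      SimpleGraph.Hom.ofLE_apply, Sym2.map_id'] using hedge
  have hmem := p.val.edges_subset_edgeSet hedge'
  exact ((atomGraph T).mem_edgeSet.mp hmem).2

lemma ncard_powerset_of_finite {α : Type*} {s : Set α} (hs : s.Finite) :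
    {T | T ⊆ s}.ncard = 2 ^ s.ncard := by
  classical
  have himg : {T | T ⊆ s} = ((↑) : Finset α → Set α) '' ↑hs.toFinset.powerset := by
    ext T
    simp only [Set.mem_setOf_eq, Set.mem_image, Finset.coe_powerset,
      Set.mem_preimage, Set.mem_powerset_iff]
    constructor
    · intro hTs
      refine ⟨(hs.subset hTs).toFinset, ?_, by simp⟩
      intro a ha
      simp only [Finset.mem_coe, Set.Finite.mem_toFinset] at ha ⊢
      exact hTs ha
    · rintro ⟨F, hF, rfl⟩
      intro a ha
      have := hF ha
      simpa using this
  rw [himg, Set.ncard_image_of_injOn (Finset.coe_injective.injOn),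
    Set.ncard_coe_finset, Finset.card_powerset]
  congr 1
  exact (Set.ncard_eq_toFinset_card _ hs).symm

/-- If the graph of a set `R` of atoms is a forest with `m` edges, then the
number of partitions expressible as the join of a subset of `R` equals `2^m`. -/
theorem joins_of_forest (R : Set (Setoid X)) (m : ℕ) (hR : ∀ a ∈ R, IsAtom a)
    (hforest : (atomGraph R).IsAcyclic) (hm : (atomGraph R).edgeSet.ncard = m) :
    {π : Setoid X | ∃ T ⊆ R, sSup T = π}.ncard = 2 ^ m := by
  classical
  have hfinSetoid : Finite (Setoid X) :=
    Finite.of_injective (fun s : Setoid X => ⇑s)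
      (fun a b h => Setoid.ext fun x y => iff_of_eq (congrFun (congrFun h x) y))
  have hRfin : R.Finite := Set.toFinite R
  -- Step 1: the set of joins is the image of the powerset under sSup
  have himg : {π : Setoid X | ∃ T ⊆ R, sSup T = π} = sSup '' {T | T ⊆ R} := by
    ext π
    exact ⟨fun ⟨T, h1, h2⟩ => ⟨T, h1, h2⟩, fun ⟨T, h1, h2⟩ => ⟨T, h1, h2⟩⟩
  -- Step 2: sSup is injective on the powerset
  have hsub : ∀ T1 T2 : Set (Setoid X), T1 ⊆ R → T2 ⊆ R → sSup T1 = sSup T2 → T1 ⊆ T2 := by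
    intro T1 T2 h1 h2 heq a ha
    obtain ⟨x, y, hxy, rfl⟩ := atom_eq_pairSetoid (hR a (h1 ha))
    have hadj : (atomGraph R).Adj x y := ⟨hxy, h1 ha⟩
    have hrel : (sSup T2) x y := by
      rw [← heq]
      exact (Setoid.le_def.mp (le_sSup ha)) (Or.inr (Or.inl ⟨rfl, rfl⟩))
    exact pair_mem_of_sSup_rel hR hforest h2 hadj hrel
  have hinj : Set.InjOn sSup {T : Set (Setoid X) | T ⊆ R} := by
    intro T1 h1 T2 h2 heq
    exact le_antisymm (hsub T1 T2 h1 h2 heq) (hsub T2 T1 h2 h1 heq.symm)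
  rw [himg, Set.ncard_image_of_injOn hinj, ncard_powerset_of_finite hRfin]
  -- Step 3: R.ncard = m via the bijection with the edge set
  congr 1
  have hcomm : ∀ x y : X, pairSetoid x y = pairSetoid y x := pairSetoid_comm
  let g : Sym2 X → Setoid X := Sym2.lift ⟨fun x y => pairSetoid x y, hcomm⟩
  have himgg : g '' (atomGraph R).edgeSet = R := by
    ext a
    constructor
    · rintro ⟨e, he, rfl⟩
      induction e with
      | h x y => exact (((atomGraph R).mem_edgeSet).mp he).2
    · intro ha
      obtain ⟨x, y, hxy, rfl⟩ := atom_eq_pairSetoid (hR a ha)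
      exact ⟨s(x, y), ((atomGraph R).mem_edgeSet).mpr ⟨hxy, ha⟩, rfl⟩
  have hinjg : Set.InjOn g (atomGraph R).edgeSet := by
    intro e1 he1 e2 he2 heq
    induction e1 with
    | h x y =>
      induction e2 with
      | h u v =>
        have hxy : x ≠ y := (((atomGraph R).mem_edgeSet).mp he1).1
        exact pairSetoid_inj hxy heq
  rw [← himgg, Set.ncard_image_of_injOn hinjg, hm]
end
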